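/- There exists a unique bounded function u^h : ℝ^ν × I_h → ℝ satisfying the fixed point equation u^h = A^h u^h, i.e. u^h(x,a) = min_{b ∈ I_h(a)} [(1−λh)·u^h(x + h·g(x,a), b) + h·f(x,a)] for all x ∈ ℝ^ν and a ∈ I_h; moreover, for each a ∈ I_h the map x ↦ u^h(x,a) is continuous on ℝ^ν. -/

import Mathlib

noncomputable section

abbrev E (ν : ℕ) := EuclideanSpace ℝ (Fin ν)

/-- The discrete set of control values `I_h = {i·h : i = 0,…,N}`. -/
def Ih (h : ℝ) (N : ℕ) : Set ℝ := {r : ℝ | ∃ i : ℕ, i ≤ N ∧ r = i * h}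

/-- The discrete dynamic programming operator
`(A^h w)(x,a) = min_{b ∈ I_h, b ≥ a} [(1−λh)·w(x + h·g(x,a), b) + h·f(x,a)]`. -/
def Aop {ν : ℕ} (lam h : ℝ) (N : ℕ)
    (g : E ν → ℝ → E ν) (f : E ν → ℝ → ℝ)
    (w : E ν → ℝ → ℝ) (x : E ν) (a : ℝ) : ℝ :=
  sInf {v : ℝ | ∃ b ∈ Ih h N, a ≤ b ∧
    v = (1 - lam * h) * w (x + h • g x a) b + h * f x a}

lemma my_abs_inf'_le {α : Type*} {s : Finset α} (hs : s.Nonempty)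
    {F : α → ℝ} {c : ℝ} (hc : ∀ j ∈ s, |F j| ≤ c) : |s.inf' hs F| ≤ c := by
  obtain ⟨j0, hj0⟩ := hs
  rw [abs_le]
  exact ⟨Finset.le_inf' _ _ fun j hj => (abs_le.mp (hc j hj)).1,
    (Finset.inf'_le _ hj0).trans (abs_le.mp (hc j0 hj0)).2⟩

lemma my_abs_inf'_sub_inf'_le {α : Type*} {s : Finset α} (hs : s.Nonempty)
    {F G : α → ℝ} {c : ℝ} (hc : ∀ j ∈ s, |F j - G j| ≤ c) :
    |s.inf' hs F - s.inf' hs G| ≤ c := by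
  rw [abs_sub_le_iff]
  constructor
  · obtain ⟨j, hj, hje⟩ := s.exists_mem_eq_inf' hs G
    have h1 := Finset.inf'_le F hj
    have h2 := (abs_le.mp (hc j hj)).2
    rw [hje]; linarith
  · obtain ⟨j, hj, hje⟩ := s.exists_mem_eq_inf' hs F
    have h1 := Finset.inf'_le G hj
    have h2 := (abs_le.mp (hc j hj)).1
    rw [hje]; linarith

lemma my_continuous_inf' {α : Type*} {X : Type*} [TopologicalSpace X]
    {s : Finset α} (hs : s.Nonempty) {F : α → X → ℝ}
    (hF : ∀ j, Continuous (F j)) :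
    Continuous fun x => s.inf' hs fun j => F j x := by
  induction hs using Finset.Nonempty.cons_induction with
  | singleton j => simp only [Finset.inf'_singleton]; exact hF j
  | cons j s hj hs ih =>
      have : (fun x => (Finset.cons j s hj).inf' (Finset.cons_nonempty hj) fun j' => F j' x)
          = fun x => min (F j x) (s.inf' hs fun j' => F j' x) := by
        funext x
        rw [Finset.inf'_cons (H := hs)]
      rw [this]
      exact (hF j).min ih

/-- The finset of admissible indices `j ≥ i`. -/
def sF (N : ℕ) (i : Fin (N+1)) : Finset (Fin (N+1)) :=
  Finset.univ.filter fun j => i ≤ j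

lemma sF_ne (N : ℕ) (i : Fin (N+1)) : (sF N i).Nonempty :=
  ⟨Fin.last N, by simp [sF, Fin.le_last]⟩

lemma mem_sF {N : ℕ} {i j : Fin (N+1)} : j ∈ sF N i ↔ i ≤ j := by simp [sF]

/-- The DP term, parameterized by a general function `w`. -/
def termF {ν : ℕ} (lam h : ℝ) (N : ℕ) (g : E ν → ℝ → E ν) (f : E ν → ℝ → ℝ)
    (w : E ν → ℝ → ℝ) (i : Fin (N+1)) (x : E ν) (j : Fin (N+1)) : ℝ :=
  (1 - lam * h) * w (x + h • g x ((i : ℕ) * h)) ((j : ℕ) * h) + h * f x ((i : ℕ) * h)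

lemma Aop_eq_inf' {ν : ℕ} (lam h : ℝ) (hh : 0 < h) (N : ℕ)
    (g : E ν → ℝ → E ν) (f : E ν → ℝ → ℝ) (w : E ν → ℝ → ℝ)
    (i : ℕ) (hiN : i ≤ N) (x : E ν) :
    Aop lam h N g f w x ((i : ℝ) * h)
      = (sF N ⟨i, Nat.lt_succ_of_le hiN⟩).inf' (sF_ne N _)
          (termF lam h N g f w ⟨i, Nat.lt_succ_of_le hiN⟩ x) := by
  set iF : Fin (N+1) := ⟨i, Nat.lt_succ_of_le hiN⟩ with hiF
  rw [Aop]
  have hset : {v : ℝ | ∃ b ∈ Ih h N, (i : ℝ) * h ≤ b ∧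
      v = (1 - lam * h) * w (x + h • g x ((i : ℝ) * h)) b + h * f x ((i : ℝ) * h)}
      = termF lam h N g f w iF x '' ↑(sF N iF) := by
    ext v
    constructor
    · rintro ⟨b, ⟨j, hjN, rfl⟩, hab, rfl⟩
      have hij : i ≤ j := by
        have h1 : (i : ℝ) ≤ (j : ℝ) := le_of_mul_le_mul_right hab hh
        exact_mod_cast h1
      refine ⟨⟨j, Nat.lt_succ_of_le hjN⟩, ?_, rfl⟩
      rw [Finset.mem_coe, mem_sF]
      exact hij
    · rintro ⟨j, hj, rfl⟩
      rw [Finset.mem_coe, mem_sF] at hj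
      refine ⟨((j : ℕ) : ℝ) * h, ⟨j, Fin.is_le j, rfl⟩, ?_, rfl⟩
      have h1 : (i : ℝ) ≤ ((j : ℕ) : ℝ) := by exact_mod_cast hj
      exact mul_le_mul_of_nonneg_right h1 hh.le
  rw [hset, ← Finset.inf'_eq_csInf_image]

open Classical in
/-- Glue a tuple of bounded continuous slices into a function `E ν → ℝ → ℝ`. -/
def uOf {ν : ℕ} (h : ℝ) (N : ℕ) (w : Fin (N+1) → BoundedContinuousFunction (E ν) ℝ)
    (x : E ν) (a : ℝ) : ℝ :=
  if ha : a ∈ Ih h N then w ⟨ha.choose, Nat.lt_succ_of_le ha.choose_spec.1⟩ x else 0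

open Classical in
lemma uOf_eq {ν : ℕ} {h : ℝ} (hh : 0 < h) {N : ℕ}
    (w : Fin (N+1) → BoundedContinuousFunction (E ν) ℝ)
    (i : ℕ) (hiN : i ≤ N) (x : E ν) :
    uOf h N w x ((i : ℝ) * h) = w ⟨i, Nat.lt_succ_of_le hiN⟩ x := by
  have hm : (i : ℝ) * h ∈ Ih h N := ⟨i, hiN, rfl⟩
  rw [uOf, dif_pos hm]
  congr 1
  have hsp := hm.choose_spec.2
  have h1 : ((hm.choose : ℕ) : ℝ) = (i : ℝ) :=
    mul_right_cancel₀ hh.ne' hsp.symm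
  have h2 : hm.choose = i := by exact_mod_cast h1
  congr 1
  exact Fin.mk_eq_mk.mpr h2

theorem Ah_fixed_point_exists_unique {ν : ℕ} (hν : 1 ≤ ν)
    (lam h : ℝ) (hlam : 0 < lam) (hh : 0 < h) (hhl : h < 1 / lam)
    (N : ℕ) (hN : 0 < N) (hNh : (N : ℝ) * h = 1)
    (g : E ν → ℝ → E ν) (f : E ν → ℝ → ℝ)
    (Lg Mg Lf Mf : ℝ) (hLg : 0 < Lg) (hMg : 0 < Mg) (hLf : 0 < Lf) (hMf : 0 < Mf)
    (hgLip : ∀ x x' : E ν, ∀ a ∈ Set.Icc (0:ℝ) 1, ∀ a' ∈ Set.Icc (0:ℝ) 1,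
      ‖g x a - g x' a'‖ ≤ Lg * (‖x - x'‖ + |a - a'|))
    (hgBdd : ∀ x : E ν, ∀ a ∈ Set.Icc (0:ℝ) 1, ‖g x a‖ ≤ Mg)
    (hfLip : ∀ x x' : E ν, ∀ a ∈ Set.Icc (0:ℝ) 1, ∀ a' ∈ Set.Icc (0:ℝ) 1,
      |f x a - f x' a'| ≤ Lf * (‖x - x'‖ + |a - a'|))
    (hfBdd : ∀ x : E ν, ∀ a ∈ Set.Icc (0:ℝ) 1, |f x a| ≤ Mf) :
    ∃ u : E ν → ℝ → ℝ,
      ((∃ M : ℝ, ∀ x : E ν, ∀ a ∈ Ih h N, |u x a| ≤ M) ∧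
        (∀ x : E ν, ∀ a ∈ Ih h N, u x a = Aop lam h N g f u x a) ∧
        (∀ a ∈ Ih h N, Continuous fun x : E ν => u x a)) ∧
      ∀ v : E ν → ℝ → ℝ,
        (∃ M : ℝ, ∀ x : E ν, ∀ a ∈ Ih h N, |v x a| ≤ M) →
        (∀ x : E ν, ∀ a ∈ Ih h N, v x a = Aop lam h N g f v x a) →
        ∀ x : E ν, ∀ a ∈ Ih h N, v x a = u x a := by
  classical
  have hlh1 : lam * h < 1 := by
    have h1 := mul_lt_mul_of_pos_left hhl hlam
    rwa [mul_one_div, div_self hlam.ne'] at h1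
  set k : ℝ := 1 - lam * h with hk_def
  have hk0 : 0 < k := by simp only [hk_def]; linarith
  have hk1 : k < 1 := by
    have : 0 < lam * h := mul_pos hlam hh
    simp only [hk_def]; linarith
  -- membership of grid points in [0,1]
  have memIcc : ∀ i : ℕ, i ≤ N → ((i : ℝ) * h) ∈ Set.Icc (0:ℝ) 1 := by
    intro i hiN
    constructor
    · positivity
    · calc (i : ℝ) * h ≤ (N : ℝ) * h := by
            have : (i : ℝ) ≤ (N : ℝ) := by exact_mod_cast hiN
            exact mul_le_mul_of_nonneg_right this hh.le
        _ = 1 := hNh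
  -- continuity of g and f in x at fixed grid control
  have hgc : ∀ a ∈ Set.Icc (0:ℝ) 1, Continuous fun x : E ν => g x a := by
    intro a ha
    have : LipschitzWith (Real.toNNReal Lg) (fun x : E ν => g x a) := by
      apply LipschitzWith.of_dist_le_mul
      intro x x'
      rw [dist_eq_norm, dist_eq_norm]
      have h2 := hgLip x x' a ha a ha
      rw [sub_self, abs_zero, add_zero] at h2
      rwa [Real.coe_toNNReal Lg hLg.le]
    exact this.continuous
  have hfc : ∀ a ∈ Set.Icc (0:ℝ) 1, Continuous fun x : E ν => f x a := by
    intro a ha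
    have : LipschitzWith (Real.toNNReal Lf) (fun x : E ν => f x a) := by
      apply LipschitzWith.of_dist_le_mul
      intro x x'
      rw [Real.dist_eq, dist_eq_norm]
      have h2 := hfLip x x' a ha a ha
      rw [sub_self, abs_zero, add_zero] at h2
      rwa [Real.coe_toNNReal Lf hLf.le]
    exact this.continuous
  -- the contraction operator on tuples of bounded continuous functions
  set W := Fin (N+1) → BoundedContinuousFunction (E ν) ℝ with hW
  have hune : (Finset.univ : Finset (Fin (N+1))).Nonempty := Finset.univ_nonempty
  set B : W → ℝ := fun w => Finset.univ.sup' hune fun j => ‖w j‖ with hB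
  have hBnn : ∀ w : W, 0 ≤ B w := by
    intro w
    have := Finset.le_sup' (f := fun j => ‖w j‖) (Finset.mem_univ (0 : Fin (N+1)))
    exact (norm_nonneg _).trans this
  have hleB : ∀ (w : W) (j : Fin (N+1)), ‖w j‖ ≤ B w := by
    intro w j
    simp only [hB]
    exact Finset.le_sup' (fun j => ‖w j‖) (Finset.mem_univ j)
  have hyc : ∀ i : Fin (N+1), Continuous fun x : E ν => x + h • g x ((i : ℕ) * h) :=
    fun i => continuous_id.add ((hgc _ (memIcc i (Fin.is_le i))).const_smul h)
  have key_bound : ∀ (w : W) (i : Fin (N+1)) (x : E ν),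
      ∀ j ∈ sF N i, |(1 - lam * h) * w j (x + h • g x ((i : ℕ) * h))
        + h * f x ((i : ℕ) * h)| ≤ k * B w + h * Mf := by
    intro w i x j _
    have h1 : |w j (x + h • g x ((i : ℕ) * h))| ≤ ‖w j‖ :=
      (w j).norm_coe_le_norm _
    have h2 : ‖w j‖ ≤ B w := hleB w j
    have h3 : |f x ((i : ℕ) * h)| ≤ Mf := hfBdd x _ (memIcc i (Fin.is_le i))
    calc |(1 - lam * h) * w j (x + h • g x ((i : ℕ) * h)) + h * f x ((i : ℕ) * h)|
        ≤ |(1 - lam * h) * w j (x + h • g x ((i : ℕ) * h))| + |h * f x ((i : ℕ) * h)| :=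
          abs_add_le _ _
      _ = k * |w j (x + h • g x ((i : ℕ) * h))| + h * |f x ((i : ℕ) * h)| := by
          rw [abs_mul, abs_mul, abs_of_nonneg hk0.le, abs_of_nonneg hh.le]
      _ ≤ k * B w + h * Mf := by
          have := h1.trans h2
          nlinarith [hk0.le, hh.le]
  set T : W → W := fun w i =>
    BoundedContinuousFunction.ofNormedAddCommGroup
      (fun x => (sF N i).inf' (sF_ne N i)
        (fun j => (1 - lam * h) * w j (x + h • g x ((i : ℕ) * h)) + h * f x ((i : ℕ) * h)))
      (my_continuous_inf' (sF_ne N i) fun j =>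
        (continuous_const.mul ((w j).continuous.comp (hyc i))).add
          (continuous_const.mul (hfc _ (memIcc i (Fin.is_le i)))))
      (k * B w + h * Mf)
      (fun x => by
        rw [Real.norm_eq_abs]
        exact my_abs_inf'_le (sF_ne N i) (key_bound w i x)) with hT
  have hTcoe : ∀ (w : W) (i : Fin (N+1)) (x : E ν),
      T w i x = (sF N i).inf' (sF_ne N i)
        (fun j => (1 - lam * h) * w j (x + h • g x ((i : ℕ) * h)) + h * f x ((i : ℕ) * h)) := by
    intro w i x
    rw [hT]
    rfl
  -- contraction estimate
  have hTdist : ∀ w1 w2 : W, dist (T w1) (T w2) ≤ k * dist w1 w2 := by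
    intro w1 w2
    have hd0 : (0:ℝ) ≤ k * dist w1 w2 := by positivity
    rw [dist_pi_le_iff hd0]
    intro i
    rw [BoundedContinuousFunction.dist_le hd0]
    intro x
    rw [Real.dist_eq, hTcoe, hTcoe]
    apply my_abs_inf'_sub_inf'_le
    intro j _
    have e : (1 - lam * h) * w1 j (x + h • g x ((i : ℕ) * h)) + h * f x ((i : ℕ) * h)
        - ((1 - lam * h) * w2 j (x + h • g x ((i : ℕ) * h)) + h * f x ((i : ℕ) * h))
        = k * (w1 j (x + h • g x ((i : ℕ) * h)) - w2 j (x + h • g x ((i : ℕ) * h))) := by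
      rw [hk_def]; ring
    rw [e, abs_mul, abs_of_nonneg hk0.le]
    have h1 : |w1 j (x + h • g x ((i : ℕ) * h)) - w2 j (x + h • g x ((i : ℕ) * h))|
        ≤ dist w1 w2 := by
      rw [← Real.dist_eq]
      exact (BoundedContinuousFunction.dist_coe_le_dist _).trans (dist_le_pi_dist w1 w2 j)
    exact mul_le_mul_of_nonneg_left h1 hk0.le
  set K : NNReal := Real.toNNReal k with hK
  have hKk : (K : ℝ) = k := Real.coe_toNNReal k hk0.le
  have hcontr : ContractingWith K T := by
    constructor
    · rw [← NNReal.coe_lt_one, hKk]; exact hk1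
    · apply LipschitzWith.of_dist_le_mul
      intro w1 w2
      rw [hKk]
      exact hTdist w1 w2
  set wstar : W := hcontr.fixedPoint T with hws
  have hfix : T wstar = wstar := hcontr.fixedPoint_isFixedPt
  set u : E ν → ℝ → ℝ := uOf h N wstar with hu
  -- u agrees with wstar on grid points
  have hueq : ∀ (i : ℕ) (hiN : i ≤ N) (x : E ν),
      u x ((i : ℝ) * h) = wstar ⟨i, Nat.lt_succ_of_le hiN⟩ x := by
    intro i hiN x
    rw [hu]
    exact uOf_eq hh wstar i hiN x
  -- u satisfies the fixed point equation
  have hufix : ∀ x : E ν, ∀ a ∈ Ih h N, u x a = Aop lam h N g f u x a := by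
    intro x a ha
    obtain ⟨i, hiN, rfl⟩ := ha
    rw [Aop_eq_inf' lam h hh N g f u i hiN x, hueq i hiN x]
    have hterm : termF lam h N g f u ⟨i, Nat.lt_succ_of_le hiN⟩ x
        = fun j => (1 - lam * h) *
            wstar j (x + h • g x (((⟨i, Nat.lt_succ_of_le hiN⟩ : Fin (N+1)) : ℕ) * h))
          + h * f x (((⟨i, Nat.lt_succ_of_le hiN⟩ : Fin (N+1)) : ℕ) * h) := by
      funext j
      rw [termF, hu, uOf_eq hh wstar (j : ℕ) (Fin.is_le j)]
    rw [hterm]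
    conv_lhs => rw [← hfix]
    rw [hTcoe]
  refine ⟨u, ⟨⟨B wstar, ?_⟩, hufix, ?_⟩, ?_⟩
  · -- boundedness
    intro x a ha
    obtain ⟨i, hiN, rfl⟩ := ha
    rw [hueq i hiN x]
    exact ((wstar _).norm_coe_le_norm x).trans (hleB wstar _)
  · -- continuity
    intro a ha
    obtain ⟨i, hiN, rfl⟩ := ha
    have : (fun x : E ν => u x ((i : ℝ) * h))
        = fun x => wstar ⟨i, Nat.lt_succ_of_le hiN⟩ x := funext fun x => hueq i hiN x
    rw [this]
    exact (wstar _).continuous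
  · -- uniqueness
    rintro v ⟨Mv, hMv⟩ hvfix x a ha
    set d : ℝ := Mv + B wstar with hd
    have huB : ∀ x : E ν, ∀ a ∈ Ih h N, |u x a| ≤ B wstar := by
      intro x a ha
      obtain ⟨i, hiN, rfl⟩ := ha
      rw [hueq i hiN x]
      exact ((wstar _).norm_coe_le_norm x).trans (hleB wstar _)
    have key : ∀ n : ℕ, ∀ x : E ν, ∀ a ∈ Ih h N, |v x a - u x a| ≤ k ^ n * d := by
      intro n
      induction n with
      | zero =>
          intro x a ha
          have h1 := hMv x a ha
          have h2 := huB x a ha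
          have h3 := abs_sub (v x a) (u x a)
          simp only [pow_zero, one_mul, hd]
          calc |v x a - u x a| ≤ |v x a| + |u x a| := abs_sub _ _
            _ ≤ Mv + B wstar := add_le_add h1 h2
      | succ n ih =>
          intro x a ha
          obtain ⟨i, hiN, rfl⟩ := ha
          rw [hvfix x _ ⟨i, hiN, rfl⟩, hufix x _ ⟨i, hiN, rfl⟩,
            Aop_eq_inf' lam h hh N g f v i hiN x, Aop_eq_inf' lam h hh N g f u i hiN x]
          apply my_abs_inf'_sub_inf'_le
          intro j _
          have e : termF lam h N g f v ⟨i, Nat.lt_succ_of_le hiN⟩ x j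
              - termF lam h N g f u ⟨i, Nat.lt_succ_of_le hiN⟩ x j
              = k * (v (x + h • g x (((⟨i, Nat.lt_succ_of_le hiN⟩ : Fin (N+1)) : ℕ) * h)) ((j:ℕ)*h)
                - u (x + h • g x (((⟨i, Nat.lt_succ_of_le hiN⟩ : Fin (N+1)) : ℕ) * h)) ((j:ℕ)*h)) := by
            rw [termF, termF, hk_def]; ring
          rw [e, abs_mul, abs_of_nonneg hk0.le]
          have hIh : ((j : ℕ) : ℝ) * h ∈ Ih h N := ⟨(j : ℕ), Fin.is_le j, rfl⟩
          have h1 := ih (x + h • g x (((⟨i, Nat.lt_succ_of_le hiN⟩ : Fin (N+1)) : ℕ) * h))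
            (((j : ℕ) : ℝ) * h) hIh
          calc k * |v _ (((j : ℕ) : ℝ) * h) - u _ (((j : ℕ) : ℝ) * h)| ≤ k * (k ^ n * d) :=
                mul_le_mul_of_nonneg_left h1 hk0.le
            _ = k ^ (n + 1) * d := by ring
    have h0 : Filter.Tendsto (fun n : ℕ => k ^ n * d) Filter.atTop (nhds 0) := by
      simpa using (tendsto_pow_atTop_nhds_zero_of_lt_one hk0.le hk1).mul_const d
    have hle : |v x a - u x a| ≤ 0 := ge_of_tendsto' h0 (fun n => key n x a ha)
    have := le_antisymm hle (abs_nonneg _)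
    exact sub_eq_zero.mp (abs_eq_zero.mp this)
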